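/- (Theorem 2, part 1) In a finite two-player multistage game, for each player i and each k ∈ ℕ₀, Λᵏ_{θ_{ik}} ⊆ Σᵏ_{θ_{ik}}; consequently, Λ^∞_{θ_i} ⊆ Σ^∞_{θ_i} for every type θ_i: the DCH solution is contained in the set of dynamically Δ^κ-rationalizable type-strategy pairs. -/

import Mathlib

open scoped BigOperators
open Classical

noncomputable section

/-- A two-player multistage game: feasibility correspondences assigning to each history
(a finite sequence of action profiles, most recent first; `[]` is the root `∅`) the set
of feasible actions of each player. -/
structure MSGame (A B : Type*) where
  feas1 : List (A × B) → Finset A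
  feas2 : List (A × B) → Finset B

namespace MSGame

variable {A B : Type*}

/-- A history is terminal iff no player has a feasible action there. -/
def terminal (G : MSGame A B) (h : List (A × B)) : Prop :=
  G.feas1 h = ∅ ∧ G.feas2 h = ∅

/-- Feasible histories: the root is feasible, and a profile may be appended to a
feasible non-terminal history iff each component is feasible for its player. -/
def feasible (G : MSGame A B) : List (A × B) → Prop
  | [] => True
  | p :: h => feasible G h ∧ ¬G.terminal h ∧ p.1 ∈ G.feas1 h ∧ p.2 ∈ G.feas2 h

/-- Well-formedness: the "wait" convention (an inactive player has exactly her waiting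
move, so one feasibility set is empty iff the other is), finitely many feasible
histories, and a nontrivial root. -/
def WellFormed (G : MSGame A B) : Prop :=
  (∀ h : List (A × B), (G.feas1 h = ∅ ↔ G.feas2 h = ∅)) ∧
  {h : List (A × B) | G.feasible h}.Finite ∧ ¬G.terminal []

/-- The set `H` of non-terminal feasible histories, as a type. -/
def Hist (G : MSGame A B) : Type _ := {h : List (A × B) // G.feasible h ∧ ¬G.terminal h}

end MSGame

/-- A strategy of player 1: a feasible action at every non-terminal feasible history. -/
structure Strat1 {A B : Type*} (G : MSGame A B) where
  act : G.Hist → A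
  mem : ∀ h : G.Hist, act h ∈ G.feas1 h.1

/-- A strategy of player 2. -/
structure Strat2 {A B : Type*} (G : MSGame A B) where
  act : G.Hist → B
  mem : ∀ h : G.Hist, act h ∈ G.feas2 h.1

/-- `s ∈ S₁(h)`: player 1's strategy `s` is consistent with reaching history `h`
(it prescribes, at every proper prefix of `h`, the action played in `h`). -/
def consistent1 {A B : Type*} (G : MSGame A B) (s : Strat1 G) (h : List (A × B)) : Prop :=
  ∀ (h' : G.Hist) (p : A × B) (l : List (A × B)), h = l ++ p :: h'.1 → s.act h' = p.1

/-- `s ∈ S₂(h)`. -/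
def consistent2 {A B : Type*} (G : MSGame A B) (s : Strat2 G) (h : List (A × B)) : Prop :=
  ∀ (h' : G.Hist) (p : A × B) (l : List (A × B)), h = l ++ p :: h'.1 → s.act h' = p.2

/-- Fuelled play function. -/
def playAux {A B : Type*} (G : MSGame A B) (s1 : Strat1 G) (s2 : Strat2 G) :
    ℕ → List (A × B) → List (A × B)
  | 0, h => h
  | n + 1, h =>
      if hf : G.feasible h ∧ ¬G.terminal h then
        playAux G s1 s2 n ((s1.act ⟨h, hf⟩, s2.act ⟨h, hf⟩) :: h)
      else h

/-- The terminal history `ζ(s₁,s₂)` induced by a strategy profile (in a well-formed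
game the fuel suffices to reach a terminal history). -/
def play {A B : Type*} (G : MSGame A B) (s1 : Strat1 G) (s2 : Strat2 G) : List (A × B) :=
  playAux G s1 s2 ({h : List (A × B) | G.feasible h}.ncard + 1) []

/-- Player 1's payoff `U₁(θ, s)`: the level-0 type gets constant 0, other levels get
`v₁` at the induced terminal history. -/
def payU1 {A B : Type*} (G : MSGame A B) (v1 : List (A × B) → ℝ)
    (θ : ℕ) (s1 : Strat1 G) (s2 : Strat2 G) : ℝ :=
  if θ = 0 then 0 else v1 (play G s1 s2)

/-- Player 2's payoff `U₂(θ, s)`. -/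
def payU2 {A B : Type*} (G : MSGame A B) (v2 : List (A × B) → ℝ)
    (θ : ℕ) (s1 : Strat1 G) (s2 : Strat2 G) : ℝ :=
  if θ = 0 then 0 else v2 (play G s1 s2)

/-- A conditional probability system of player 1 over (opponent level, opponent
strategy) pairs: at each `h ∈ H` a probability distribution concentrated on
`Θ × S₂(h)`, satisfying the chain rule. -/
structure CPS2 {A B : Type*} (G : MSGame A B) where
  p : G.Hist → ℕ × Strat2 G → ℝ
  nonneg : ∀ h x, 0 ≤ p h x
  supp : ∀ h x, p h x ≠ 0 → consistent2 G x.2 h.1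
  hasSum_one : ∀ h, HasSum (p h) 1
  chain : ∀ h' h'' : G.Hist, h'.1 <:+ h''.1 → h'.1 ≠ h''.1 →
    ∀ x : ℕ × Strat2 G, consistent2 G x.2 h''.1 →
      p h' x = p h'' x * ∑' y : ℕ × Strat2 G, (if consistent2 G y.2 h''.1 then p h' y else 0)

/-- A conditional probability system of player 2. -/
structure CPS1 {A B : Type*} (G : MSGame A B) where
  p : G.Hist → ℕ × Strat1 G → ℝ
  nonneg : ∀ h x, 0 ≤ p h x
  supp : ∀ h x, p h x ≠ 0 → consistent1 G x.2 h.1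
  hasSum_one : ∀ h, HasSum (p h) 1
  chain : ∀ h' h'' : G.Hist, h'.1 <:+ h''.1 → h'.1 ≠ h''.1 →
    ∀ x : ℕ × Strat1 G, consistent1 G x.2 h''.1 →
      p h' x = p h'' x * ∑' y : ℕ × Strat1 G, (if consistent1 G y.2 h''.1 then p h' y else 0)

/-- Marginal probability of the opponent's level-`t` type at history `h` (player 1's CPS). -/
def margD2 {A B : Type*} {G : MSGame A B} (μ : CPS2 G) (h : G.Hist) (t : ℕ) : ℝ :=
  ∑' s : Strat2 G, μ.p h (t, s)

def margD1 {A B : Type*} {G : MSGame A B} (μ : CPS1 G) (h : G.Hist) (t : ℕ) : ℝ :=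
  ∑' s : Strat1 G, μ.p h (t, s)

/-- `f` normalized to the levels `0, …, k-1` (`f^k` in the paper). -/
def fnorm (f : ℕ → ℝ) (k t : ℕ) : ℝ := f t / ∑ ℓ ∈ Finset.range k, f ℓ

/-- DK1–DK3 (membership in the dynamic `Δ^{θ_{1k}}`); no restriction for `k = 0`. -/
def memDeltaD2 {A B : Type*} (G : MSGame A B) (f : ℕ → ℝ) (k : ℕ) (μ : CPS2 G) : Prop :=
  k ≠ 0 →
    ((∀ (h : G.Hist) (t : ℕ), k ≤ t → margD2 μ h t = 0) ∧
     (∀ h : G.Hist, 0 < margD2 μ h 0 →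
        ∀ s : Strat2 G, consistent2 G s h.1 →
          μ.p h (0, s) / margD2 μ h 0 =
            1 / (({s' : Strat2 G | consistent2 G s' h.1}).ncard : ℝ)) ∧
     (∀ hr : G.feasible [] ∧ ¬G.terminal [],
        ∀ t : ℕ, t < k → margD2 μ ⟨[], hr⟩ t = fnorm f k t))

def memDeltaD1 {A B : Type*} (G : MSGame A B) (f : ℕ → ℝ) (k : ℕ) (μ : CPS1 G) : Prop :=
  k ≠ 0 →
    ((∀ (h : G.Hist) (t : ℕ), k ≤ t → margD1 μ h t = 0) ∧
     (∀ h : G.Hist, 0 < margD1 μ h 0 →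
        ∀ s : Strat1 G, consistent1 G s h.1 →
          μ.p h (0, s) / margD1 μ h 0 =
            1 / (({s' : Strat1 G | consistent1 G s' h.1}).ncard : ℝ)) ∧
     (∀ hr : G.feasible [] ∧ ¬G.terminal [],
        ∀ t : ℕ, t < k → margD1 μ ⟨[], hr⟩ t = fnorm f k t))

/-- Player 1's conditional expected payoff at `h` from strategy `s1`, own level `θ`. -/
def expU1 {A B : Type*} (G : MSGame A B) (v1 : List (A × B) → ℝ)
    (θ : ℕ) (μ : CPS2 G) (h : G.Hist) (s1 : Strat1 G) : ℝ :=
  ∑' x : ℕ × Strat2 G, μ.p h x * payU1 G v1 θ s1 x.2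

def expU2 {A B : Type*} (G : MSGame A B) (v2 : List (A × B) → ℝ)
    (θ : ℕ) (μ : CPS1 G) (h : G.Hist) (s2 : Strat2 G) : ℝ :=
  ∑' x : ℕ × Strat1 G, μ.p h x * payU2 G v2 θ x.2 s2

/-- Sequential rationality of `s1` for the level-`θ` type of player 1 w.r.t. CPS `μ`. -/
def seqRat1 {A B : Type*} (G : MSGame A B) (v1 : List (A × B) → ℝ)
    (θ : ℕ) (μ : CPS2 G) (s1 : Strat1 G) : Prop :=
  ∀ h : G.Hist, consistent1 G s1 h.1 →
    ∀ s1' : Strat1 G, consistent1 G s1' h.1 →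
      expU1 G v1 θ μ h s1' ≤ expU1 G v1 θ μ h s1

def seqRat2 {A B : Type*} (G : MSGame A B) (v2 : List (A × B) → ℝ)
    (θ : ℕ) (μ : CPS1 G) (s2 : Strat2 G) : Prop :=
  ∀ h : G.Hist, consistent2 G s2 h.1 →
    ∀ s2' : Strat2 G, consistent2 G s2' h.1 →
      expU2 G v2 θ μ h s2' ≤ expU2 G v2 θ μ h s2

/-- The dynamic Δ^κ-rationalization procedure (pairs of surviving
(level, strategy) sets for the two players). -/
def SigmaD {A B : Type*} (G : MSGame A B) (v1 v2 : List (A × B) → ℝ) (f : ℕ → ℝ) :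
    ℕ → Set (ℕ × Strat1 G) × Set (ℕ × Strat2 G)
  | 0 => (Set.univ, Set.univ)
  | n + 1 =>
      let P := SigmaD G v1 v2 f n
      ({x | x ∈ P.1 ∧ ∃ μ : CPS2 G, memDeltaD2 G f x.1 μ ∧
          (∀ h : G.Hist, (∃ y : ℕ × Strat2 G, y ∈ P.2 ∧ consistent2 G y.2 h.1) →
            ∑' y : ℕ × Strat2 G, Set.indicator P.2 (μ.p h) y = 1) ∧
          seqRat1 G v1 x.1 μ x.2},
       {x | x ∈ P.2 ∧ ∃ μ : CPS1 G, memDeltaD1 G f x.1 μ ∧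
          (∀ h : G.Hist, (∃ y : ℕ × Strat1 G, y ∈ P.1 ∧ consistent1 G y.2 h.1) →
            ∑' y : ℕ × Strat1 G, Set.indicator P.1 (μ.p h) y = 1) ∧
          seqRat2 G v2 x.1 μ x.2})

/-- The section `Σⁿ_{θ_{1k}}` (a set of strategies of player 1). -/
def SigmaDSec1 {A B : Type*} (G : MSGame A B) (v1 v2 : List (A × B) → ℝ) (f : ℕ → ℝ)
    (n k : ℕ) : Set (Strat1 G) :=
  {s | (k, s) ∈ (SigmaD G v1 v2 f n).1}

def SigmaDSec2 {A B : Type*} (G : MSGame A B) (v1 v2 : List (A × B) → ℝ) (f : ℕ → ℝ)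
    (n k : ℕ) : Set (Strat2 G) :=
  {s | (k, s) ∈ (SigmaD G v1 v2 f n).2}

/-- The DCH-procedure: step `n` returns, for each player and each level `k`, the set of
surviving strategies `Λⁿ_{θ_{ik}}`. -/
def LambdaD {A B : Type*} (G : MSGame A B) (v1 v2 : List (A × B) → ℝ) (f : ℕ → ℝ) :
    ℕ → (ℕ → Set (Strat1 G)) × (ℕ → Set (Strat2 G))
  | 0 => (fun _ => Set.univ, fun _ => Set.univ)
  | n + 1 =>
      let P := LambdaD G v1 v2 f n
      (fun k =>
        if k = n + 1 then
          {s | ∃ μ : CPS2 G, memDeltaD2 G f (n + 1) μ ∧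
            (∀ hr : G.feasible [] ∧ ¬G.terminal [],
              (∀ x : ℕ × Strat2 G, μ.p ⟨[], hr⟩ x ≠ 0 ↔ x.1 ≤ n ∧ x.2 ∈ P.2 x.1) ∧
              (∀ t : ℕ, t ≤ n → ∀ s2 s2' : Strat2 G, s2 ∈ P.2 t → s2' ∈ P.2 t →
                μ.p ⟨[], hr⟩ (t, s2) = μ.p ⟨[], hr⟩ (t, s2'))) ∧
            seqRat1 G v1 (n + 1) μ s}
        else P.1 k,
       fun k =>
        if k = n + 1 then
          {s | ∃ μ : CPS1 G, memDeltaD1 G f (n + 1) μ ∧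
            (∀ hr : G.feasible [] ∧ ¬G.terminal [],
              (∀ x : ℕ × Strat1 G, μ.p ⟨[], hr⟩ x ≠ 0 ↔ x.1 ≤ n ∧ x.2 ∈ P.1 x.1) ∧
              (∀ t : ℕ, t ≤ n → ∀ s1 s1' : Strat1 G, s1 ∈ P.1 t → s1' ∈ P.1 t →
                μ.p ⟨[], hr⟩ (t, s1) = μ.p ⟨[], hr⟩ (t, s1'))) ∧
            seqRat2 G v2 (n + 1) μ s}
        else P.2 k)

/-- `Λⁿ_{θ_{1k}}`. -/
def LambdaDSec1 {A B : Type*} (G : MSGame A B) (v1 v2 : List (A × B) → ℝ) (f : ℕ → ℝ)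
    (n k : ℕ) : Set (Strat1 G) :=
  (LambdaD G v1 v2 f n).1 k

/-- `Λⁿ_{θ_{2k}}`. -/
def LambdaDSec2 {A B : Type*} (G : MSGame A B) (v1 v2 : List (A × B) → ℝ) (f : ℕ → ℝ)
    (n k : ℕ) : Set (Strat2 G) :=
  (LambdaD G v1 v2 f n).2 k

end

noncomputable section AuxProof

variable {A B : Type*}

lemma feasible_of_append (G : MSGame A B) :
    ∀ (l : List (A × B)) {m : List (A × B)}, G.feasible (l ++ m) → G.feasible m := by
  intro l
  induction l with
  | nil => intro m h; exact h
  | cons p l ih =>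
    intro m h
    rw [List.cons_append] at h
    simp only [MSGame.feasible] at h
    exact ih h.1

lemma mem_feas_of_feasible_cons (G : MSGame A B) {p : A × B} {t : List (A × B)}
    (h : G.feasible (p :: t)) : p.1 ∈ G.feas1 t ∧ p.2 ∈ G.feas2 t := by
  simp only [MSGame.feasible] at h
  exact ⟨h.2.2.1, h.2.2.2⟩

lemma cons_eq_of_append_eq {α : Type*} {l l' : List α} {p q : α} {t : List α}
    (h : l ++ p :: t = l' ++ q :: t) : p = q := by
  have h2 := (List.append_inj' h (by simp)).2
  simpa using h2

lemma consistent2_mono (G : MSGame A B) {s : Strat2 G} {h' h'' : List (A × B)}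
    (hsuf : h' <:+ h'') (hc : consistent2 G s h'') : consistent2 G s h' := by
  obtain ⟨l0, rfl⟩ := hsuf
  intro hist p l heq
  exact hc hist p (l0 ++ l) (by rw [heq, List.append_assoc])

lemma consistent1_mono (G : MSGame A B) {s : Strat1 G} {h' h'' : List (A × B)}
    (hsuf : h' <:+ h'') (hc : consistent1 G s h'') : consistent1 G s h' := by
  obtain ⟨l0, rfl⟩ := hsuf
  intro hist p l heq
  exact hc hist p (l0 ++ l) (by rw [heq, List.append_assoc])

lemma feas1_nonempty (G : MSGame A B) (hG : G.WellFormed) (h : G.Hist) :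
    (G.feas1 h.1).Nonempty := by
  rcases Finset.eq_empty_or_nonempty (G.feas1 h.1) with he | hne
  · exact absurd ⟨he, (hG.1 h.1).1 he⟩ h.2.2
  · exact hne

lemma feas2_nonempty (G : MSGame A B) (hG : G.WellFormed) (h : G.Hist) :
    (G.feas2 h.1).Nonempty := by
  rcases Finset.eq_empty_or_nonempty (G.feas2 h.1) with he | hne
  · exact absurd ⟨(hG.1 h.1).2 he, he⟩ h.2.2
  · exact hne

lemma exists_consistent2 (G : MSGame A B) (hG : G.WellFormed) (h : List (A × B))
    (hfeas : G.feasible h) : ∃ s : Strat2 G, consistent2 G s h := by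
  refine ⟨⟨fun h' => if hx : ∃ p : A × B, ∃ l, h = l ++ p :: h'.1 then hx.choose.2
      else (feas2_nonempty G hG h').choose, fun h' => ?_⟩, ?_⟩
  · beta_reduce
    split_ifs with hx
    · obtain ⟨l, hl⟩ := hx.choose_spec
      have hf2 : G.feasible (hx.choose :: h'.1) :=
        feasible_of_append G l (hl ▸ hfeas)
      exact (mem_feas_of_feasible_cons G hf2).2
    · exact (feas2_nonempty G hG h').choose_spec
  · intro h' p l heq
    have hx : ∃ p : A × B, ∃ l, h = l ++ p :: h'.1 := ⟨p, l, heq⟩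
    show (if hx : ∃ p : A × B, ∃ l, h = l ++ p :: h'.1 then hx.choose.2
      else (feas2_nonempty G hG h').choose) = p.2
    rw [dif_pos hx]
    obtain ⟨l', hl'⟩ := hx.choose_spec
    have : hx.choose = p := cons_eq_of_append_eq (hl' ▸ heq : l' ++ _ :: h'.1 = l ++ p :: h'.1)
    rw [this]

lemma exists_consistent1 (G : MSGame A B) (hG : G.WellFormed) (h : List (A × B))
    (hfeas : G.feasible h) : ∃ s : Strat1 G, consistent1 G s h := by
  refine ⟨⟨fun h' => if hx : ∃ p : A × B, ∃ l, h = l ++ p :: h'.1 then hx.choose.1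
      else (feas1_nonempty G hG h').choose, fun h' => ?_⟩, ?_⟩
  · beta_reduce
    split_ifs with hx
    · obtain ⟨l, hl⟩ := hx.choose_spec
      have hf2 : G.feasible (hx.choose :: h'.1) :=
        feasible_of_append G l (hl ▸ hfeas)
      exact (mem_feas_of_feasible_cons G hf2).1
    · exact (feas1_nonempty G hG h').choose_spec
  · intro h' p l heq
    have hx : ∃ p : A × B, ∃ l, h = l ++ p :: h'.1 := ⟨p, l, heq⟩
    show (if hx : ∃ p : A × B, ∃ l, h = l ++ p :: h'.1 then hx.choose.1
      else (feas1_nonempty G hG h').choose) = p.1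
    rw [dif_pos hx]
    obtain ⟨l', hl'⟩ := hx.choose_spec
    have : hx.choose = p := cons_eq_of_append_eq (hl' ▸ heq : l' ++ _ :: h'.1 = l ++ p :: h'.1)
    rw [this]

end AuxProof

noncomputable section AuxProof2

variable {A B : Type*}

lemma strat2_ext {G : MSGame A B} {s t : Strat2 G} (h : s.act = t.act) : s = t := by
  cases s; cases t; cases h; rfl

lemma strat1_ext {G : MSGame A B} {s t : Strat1 G} (h : s.act = t.act) : s = t := by
  cases s; cases t; cases h; rfl

lemma hist_finite (G : MSGame A B) (hG : G.WellFormed) : Finite G.Hist := by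
  have hfin : {h : List (A × B) | G.feasible h ∧ ¬G.terminal h}.Finite :=
    hG.2.1.subset (fun h hh => hh.1)
  exact hfin.to_subtype

lemma finite_strat2 (G : MSGame A B) (hG : G.WellFormed) : Finite (Strat2 G) := by
  haveI := hist_finite G hG
  have hinj : Function.Injective
      (fun s : Strat2 G => fun h : G.Hist => (⟨s.act h, s.mem h⟩ : {b // b ∈ G.feas2 h.1})) := by
    intro s t hst
    apply strat2_ext
    funext h
    exact congrArg Subtype.val (congrFun hst h)
  exact Finite.of_injective _ hinj

lemma finite_strat1 (G : MSGame A B) (hG : G.WellFormed) : Finite (Strat1 G) := by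
  haveI := hist_finite G hG
  have hinj : Function.Injective
      (fun s : Strat1 G => fun h : G.Hist => (⟨s.act h, s.mem h⟩ : {a // a ∈ G.feas1 h.1})) := by
    intro s t hst
    apply strat1_ext
    funext h
    exact congrArg Subtype.val (congrFun hst h)
  exact Finite.of_injective _ hinj

/-- number of strategies of player 2 consistent with `h`, as a real. -/
def nc2 (G : MSGame A B) (h : G.Hist) : ℝ :=
  ({s : Strat2 G | consistent2 G s h.1}.ncard : ℝ)

def nc1 (G : MSGame A B) (h : G.Hist) : ℝ :=
  ({s : Strat1 G | consistent1 G s h.1}.ncard : ℝ)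

lemma hasSum_unif2 (G : MSGame A B) (hG : G.WellFormed) (h : G.Hist) (r : ℝ) :
    HasSum (fun y : ℕ × Strat2 G => if y.1 = 0 ∧ consistent2 G y.2 h.1 then r else 0)
      (nc2 G h * r) := by
  haveI := finite_strat2 G hG
  have hfin : {s : Strat2 G | consistent2 G s h.1}.Finite := Set.toFinite _
  set F : Finset (ℕ × Strat2 G) := ({0} : Finset ℕ) ×ˢ hfin.toFinset with hF
  have hvanish : ∀ x ∉ F, (if x.1 = 0 ∧ consistent2 G x.2 h.1 then r else 0) = 0 := by
    intro x hx
    rw [if_neg]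
    rintro ⟨h1, h2⟩
    exact hx (Finset.mem_product.2 ⟨Finset.mem_singleton.2 h1, hfin.mem_toFinset.2 h2⟩)
  have hs : HasSum _ _ := hasSum_sum_of_ne_finset_zero hvanish
  have hsum : ∑ x ∈ F, (if x.1 = 0 ∧ consistent2 G x.2 h.1 then r else 0) = nc2 G h * r := by
    rw [Finset.sum_congr rfl (g := fun _ => r) (fun x hx => ?_), Finset.sum_const,
      nsmul_eq_mul]
    · congr 1
      rw [hF, Finset.card_product, Finset.card_singleton, one_mul, nc2,
        Set.ncard_eq_toFinset_card _ hfin]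
    · rcases Finset.mem_product.1 hx with ⟨h1, h2⟩
      exact if_pos ⟨Finset.mem_singleton.1 h1, hfin.mem_toFinset.1 h2⟩
  rwa [hsum] at hs

lemma hasSum_unif1 (G : MSGame A B) (hG : G.WellFormed) (h : G.Hist) (r : ℝ) :
    HasSum (fun y : ℕ × Strat1 G => if y.1 = 0 ∧ consistent1 G y.2 h.1 then r else 0)
      (nc1 G h * r) := by
  haveI := finite_strat1 G hG
  have hfin : {s : Strat1 G | consistent1 G s h.1}.Finite := Set.toFinite _
  set F : Finset (ℕ × Strat1 G) := ({0} : Finset ℕ) ×ˢ hfin.toFinset with hF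
  have hvanish : ∀ x ∉ F, (if x.1 = 0 ∧ consistent1 G x.2 h.1 then r else 0) = 0 := by
    intro x hx
    rw [if_neg]
    rintro ⟨h1, h2⟩
    exact hx (Finset.mem_product.2 ⟨Finset.mem_singleton.2 h1, hfin.mem_toFinset.2 h2⟩)
  have hs : HasSum _ _ := hasSum_sum_of_ne_finset_zero hvanish
  have hsum : ∑ x ∈ F, (if x.1 = 0 ∧ consistent1 G x.2 h.1 then r else 0) = nc1 G h * r := by
    rw [Finset.sum_congr rfl (g := fun _ => r) (fun x hx => ?_), Finset.sum_const,
      nsmul_eq_mul]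
    · congr 1
      rw [hF, Finset.card_product, Finset.card_singleton, one_mul, nc1,
        Set.ncard_eq_toFinset_card _ hfin]
    · rcases Finset.mem_product.1 hx with ⟨h1, h2⟩
      exact if_pos ⟨Finset.mem_singleton.1 h1, hfin.mem_toFinset.1 h2⟩
  rwa [hsum] at hs

lemma nc2_pos (G : MSGame A B) (hG : G.WellFormed) (h : G.Hist) : 0 < nc2 G h := by
  haveI := finite_strat2 G hG
  have hfin : {s : Strat2 G | consistent2 G s h.1}.Finite := Set.toFinite _
  obtain ⟨s, hs⟩ := exists_consistent2 G hG h.1 h.2.1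
  have : 0 < {s : Strat2 G | consistent2 G s h.1}.ncard :=
    (Set.ncard_pos hfin).2 ⟨s, hs⟩
  rw [nc2]; exact_mod_cast this

lemma nc1_pos (G : MSGame A B) (hG : G.WellFormed) (h : G.Hist) : 0 < nc1 G h := by
  haveI := finite_strat1 G hG
  have hfin : {s : Strat1 G | consistent1 G s h.1}.Finite := Set.toFinite _
  obtain ⟨s, hs⟩ := exists_consistent1 G hG h.1 h.2.1
  have : 0 < {s : Strat1 G | consistent1 G s h.1}.ncard :=
    (Set.ncard_pos hfin).2 ⟨s, hs⟩
  rw [nc1]; exact_mod_cast this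

end AuxProof2

noncomputable section AuxProof3

variable {A B : Type*}

/-- The CPS of player 1 putting, at each history, the uniform distribution on
level-0 opponents with consistent strategies. -/
def unif2 (G : MSGame A B) (hG : G.WellFormed) : CPS2 G where
  p h x := if x.1 = 0 ∧ consistent2 G x.2 h.1 then 1 / nc2 G h else 0
  nonneg h x := by
    beta_reduce
    split_ifs with hc
    · exact div_nonneg zero_le_one (le_of_lt (nc2_pos G hG h))
    · exact le_refl 0
  supp h x hx := by
    by_contra hc
    exact hx (if_neg (fun hh => hc hh.2))
  hasSum_one h := by
    have h1 := hasSum_unif2 G hG h (1 / nc2 G h)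
    rwa [mul_one_div, div_self (ne_of_gt (nc2_pos G hG h))] at h1
  chain h' h'' hsuf hne x hx := by
    have hfun : ∀ y : ℕ × Strat2 G, (if consistent2 G y.2 h''.1 then
        (if y.1 = 0 ∧ consistent2 G y.2 h'.1 then 1 / nc2 G h' else 0) else 0)
        = (if y.1 = 0 ∧ consistent2 G y.2 h''.1 then 1 / nc2 G h' else 0) := by
      intro y
      by_cases hc : consistent2 G y.2 h''.1
      · rw [if_pos hc]
        by_cases hy0 : y.1 = 0
        · rw [if_pos ⟨hy0, consistent2_mono G hsuf hc⟩, if_pos ⟨hy0, hc⟩]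
        · rw [if_neg (fun hh => hy0 hh.1), if_neg (fun hh => hy0 hh.1)]
      · rw [if_neg hc, if_neg (fun hh => hc hh.2)]
    have htsum : (∑' y : ℕ × Strat2 G, (if consistent2 G y.2 h''.1 then
        (if y.1 = 0 ∧ consistent2 G y.2 h'.1 then 1 / nc2 G h' else 0) else 0))
        = nc2 G h'' * (1 / nc2 G h') := by
      rw [tsum_congr hfun, (hasSum_unif2 G hG h'' (1 / nc2 G h')).tsum_eq]
    beta_reduce
    rw [htsum]
    by_cases hx0 : x.1 = 0
    · rw [if_pos ⟨hx0, consistent2_mono G hsuf hx⟩, if_pos ⟨hx0, hx⟩]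
      have h2 := ne_of_gt (nc2_pos G hG h'')
      field_simp
    · rw [if_neg (fun hh => hx0 hh.1), if_neg (fun hh => hx0 hh.1), zero_mul]

def unif1 (G : MSGame A B) (hG : G.WellFormed) : CPS1 G where
  p h x := if x.1 = 0 ∧ consistent1 G x.2 h.1 then 1 / nc1 G h else 0
  nonneg h x := by
    beta_reduce
    split_ifs with hc
    · exact div_nonneg zero_le_one (le_of_lt (nc1_pos G hG h))
    · exact le_refl 0
  supp h x hx := by
    by_contra hc
    exact hx (if_neg (fun hh => hc hh.2))
  hasSum_one h := by
    have h1 := hasSum_unif1 G hG h (1 / nc1 G h)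
    rwa [mul_one_div, div_self (ne_of_gt (nc1_pos G hG h))] at h1
  chain h' h'' hsuf hne x hx := by
    have hfun : ∀ y : ℕ × Strat1 G, (if consistent1 G y.2 h''.1 then
        (if y.1 = 0 ∧ consistent1 G y.2 h'.1 then 1 / nc1 G h' else 0) else 0)
        = (if y.1 = 0 ∧ consistent1 G y.2 h''.1 then 1 / nc1 G h' else 0) := by
      intro y
      by_cases hc : consistent1 G y.2 h''.1
      · rw [if_pos hc]
        by_cases hy0 : y.1 = 0
        · rw [if_pos ⟨hy0, consistent1_mono G hsuf hc⟩, if_pos ⟨hy0, hc⟩]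
        · rw [if_neg (fun hh => hy0 hh.1), if_neg (fun hh => hy0 hh.1)]
      · rw [if_neg hc, if_neg (fun hh => hc hh.2)]
    have htsum : (∑' y : ℕ × Strat1 G, (if consistent1 G y.2 h''.1 then
        (if y.1 = 0 ∧ consistent1 G y.2 h'.1 then 1 / nc1 G h' else 0) else 0))
        = nc1 G h'' * (1 / nc1 G h') := by
      rw [tsum_congr hfun, (hasSum_unif1 G hG h'' (1 / nc1 G h')).tsum_eq]
    beta_reduce
    rw [htsum]
    by_cases hx0 : x.1 = 0
    · rw [if_pos ⟨hx0, consistent1_mono G hsuf hx⟩, if_pos ⟨hx0, hx⟩]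
      have h2 := ne_of_gt (nc1_pos G hG h'')
      field_simp
    · rw [if_neg (fun hh => hx0 hh.1), if_neg (fun hh => hx0 hh.1), zero_mul]

lemma tsum_indicator_eq_one {γ : Type*} (S : Set γ) (g : γ → ℝ) (hg : HasSum g 1)
    (hsub : ∀ x, g x ≠ 0 → x ∈ S) : ∑' x, Set.indicator S g x = 1 := by
  have heq : Set.indicator S g = g := by
    funext x
    by_cases hx : x ∈ S
    · exact Set.indicator_of_mem hx g
    · rw [Set.indicator_of_notMem hx]
      by_contra h0
      exact hx (hsub x (fun e => h0 e.symm))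
  rw [heq, hg.tsum_eq]

lemma lambda_stable (G : MSGame A B) (v1 v2 : List (A × B) → ℝ) (f : ℕ → ℝ) :
    ∀ n k, k ≤ n → (LambdaD G v1 v2 f n).1 k = (LambdaD G v1 v2 f k).1 k ∧
      (LambdaD G v1 v2 f n).2 k = (LambdaD G v1 v2 f k).2 k := by
  intro n
  induction n with
  | zero =>
    intro k hk
    rw [Nat.le_zero.1 hk]
    exact ⟨rfl, rfl⟩
  | succ n ih =>
    intro k hk
    rcases Nat.lt_or_ge k (n + 1) with hlt | hge
    · have hk' : k ≤ n := Nat.lt_succ_iff.1 hlt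
      have hne : k ≠ n + 1 := Nat.ne_of_lt hlt
      constructor
      · show (LambdaD G v1 v2 f (n + 1)).1 k = _
        simp only [LambdaD, if_neg hne]
        exact (ih k hk').1
      · show (LambdaD G v1 v2 f (n + 1)).2 k = _
        simp only [LambdaD, if_neg hne]
        exact (ih k hk').2
    · have : k = n + 1 := le_antisymm hk hge
      subst this
      exact ⟨rfl, rfl⟩

lemma lambda_zero1 (G : MSGame A B) (v1 v2 : List (A × B) → ℝ) (f : ℕ → ℝ) (n : ℕ) :
    (LambdaD G v1 v2 f n).1 0 = Set.univ := by
  rw [(lambda_stable G v1 v2 f n 0 (Nat.zero_le n)).1]; rfl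

lemma lambda_zero2 (G : MSGame A B) (v1 v2 : List (A × B) → ℝ) (f : ℕ → ℝ) (n : ℕ) :
    (LambdaD G v1 v2 f n).2 0 = Set.univ := by
  rw [(lambda_stable G v1 v2 f n 0 (Nat.zero_le n)).2]; rfl

end AuxProof3


/-- Theorem 2, part 1: `Λᵏ_{θ_{ik}} ⊆ Σᵏ_{θ_{ik}}` for each player i and
level k; consequently the DCH solution is contained in the set of dynamically
Δ^κ-rationalizable type-strategy pairs. -/
theorem dch_subset_sigmaD {A B : Type*} (G : MSGame A B) (hG : G.WellFormed)
    (v1 v2 : List (A × B) → ℝ)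
    (f : ℕ → ℝ) (hf : ∀ n, 0 < f n) (hfsum : HasSum f 1) :
    (∀ k : ℕ, LambdaDSec1 G v1 v2 f k k ⊆ SigmaDSec1 G v1 v2 f k k) ∧
    (∀ k : ℕ, LambdaDSec2 G v1 v2 f k k ⊆ SigmaDSec2 G v1 v2 f k k) ∧
    (∀ k : ℕ, (⋂ n : ℕ, LambdaDSec1 G v1 v2 f n k) ⊆ ⋂ n : ℕ, SigmaDSec1 G v1 v2 f n k) ∧
    (∀ k : ℕ, (⋂ n : ℕ, LambdaDSec2 G v1 v2 f n k) ⊆ ⋂ n : ℕ, SigmaDSec2 G v1 v2 f n k) := by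
  have hroot : G.feasible [] ∧ ¬G.terminal [] := ⟨trivial, hG.2.2⟩
  have claim : ∀ m : ℕ,
      (∀ k (s : Strat1 G), s ∈ (LambdaD G v1 v2 f k).1 k → (k, s) ∈ (SigmaD G v1 v2 f m).1) ∧
      (∀ k (s : Strat2 G), s ∈ (LambdaD G v1 v2 f k).2 k → (k, s) ∈ (SigmaD G v1 v2 f m).2) := by
    intro m
    induction m with
    | zero => exact ⟨fun _ _ _ => Set.mem_univ _, fun _ _ _ => Set.mem_univ _⟩
    | succ m ih =>
      constructor
      · -- player 1
        intro k s hs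
        simp only [SigmaD, Set.mem_setOf_eq]
        refine ⟨ih.1 k s hs, ?_⟩
        cases k with
        | zero =>
          refine ⟨unif2 G hG, fun h0 => absurd rfl h0, ?_, ?_⟩
          · intro h _
            apply tsum_indicator_eq_one _ _ ((unif2 G hG).hasSum_one h)
            intro x hx
            have hx' : x.1 = 0 ∧ consistent2 G x.2 h.1 := by
              by_contra hc
              exact hx (if_neg hc)
            have hmem : x.2 ∈ (LambdaD G v1 v2 f x.1).2 x.1 := by
              rw [hx'.1, lambda_zero2]
              exact Set.mem_univ _
            have := ih.2 x.1 x.2 hmem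
            rwa [Prod.mk.eta] at this
          · intro h _ s1' _
            simp [expU1, payU1]
        | succ n =>
          simp only [LambdaD, Set.mem_setOf_eq, if_pos rfl] at hs
          obtain ⟨μ, hmem, hsupp, hsr⟩ := hs
          refine ⟨μ, hmem, ?_, hsr⟩
          intro h _
          apply tsum_indicator_eq_one _ _ (μ.hasSum_one h)
          have hrootsupp : ∀ x : ℕ × Strat2 G,
              μ.p ⟨[], hroot⟩ x ≠ 0 → x ∈ (SigmaD G v1 v2 f m).2 := by
            intro x hx
            obtain ⟨hx1, hx2⟩ := ((hsupp hroot).1 x).1 hx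
            rw [(lambda_stable G v1 v2 f n x.1 hx1).2] at hx2
            have := ih.2 x.1 x.2 hx2
            rwa [Prod.mk.eta] at this
          intro x hx
          by_cases hnil : h.1 = []
          · have heq : h = (⟨[], hroot⟩ : G.Hist) := Subtype.ext hnil
            rw [heq] at hx
            exact hrootsupp x hx
          · obtain ⟨s2c, hs2c⟩ := exists_consistent2 G hG h.1 h.2.1
            have hpos0 : μ.p ⟨[], hroot⟩ (0, s2c) ≠ 0 := by
              apply ((hsupp hroot).1 (0, s2c)).2
              refine ⟨Nat.zero_le n, ?_⟩
              rw [lambda_zero2]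
              exact Set.mem_univ _
            have hg0 : ∀ y : ℕ × Strat2 G,
                0 ≤ (if consistent2 G y.2 h.1 then μ.p ⟨[], hroot⟩ y else 0) := by
              intro y
              split_ifs
              exacts [μ.nonneg _ y, le_refl 0]
            have hgle : ∀ y : ℕ × Strat2 G,
                (if consistent2 G y.2 h.1 then μ.p ⟨[], hroot⟩ y else 0) ≤ μ.p ⟨[], hroot⟩ y := by
              intro y
              split_ifs
              exacts [le_refl _, μ.nonneg _ y]
            have hgs : Summable (fun y : ℕ × Strat2 G =>
                if consistent2 G y.2 h.1 then μ.p ⟨[], hroot⟩ y else 0) :=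
              Summable.of_nonneg_of_le hg0 hgle (μ.hasSum_one _).summable
            have hcpos : 0 < ∑' y : ℕ × Strat2 G,
                (if consistent2 G y.2 h.1 then μ.p ⟨[], hroot⟩ y else 0) := by
              have h1 : (0:ℝ) < (if consistent2 G (0, s2c).2 h.1 then μ.p ⟨[], hroot⟩ (0, s2c) else 0) := by
                rw [if_pos hs2c]
                exact lt_of_le_of_ne (μ.nonneg _ _) (Ne.symm hpos0)
              exact lt_of_lt_of_le h1 (Summable.le_tsum hgs (0, s2c) (fun y _ => hg0 y))
            have hchain := μ.chain ⟨[], hroot⟩ h List.nil_suffix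
              (fun e => hnil e.symm) x (μ.supp h x hx)
            apply hrootsupp
            rw [hchain]
            exact mul_ne_zero hx (ne_of_gt hcpos)
      · -- player 2
        intro k s hs
        simp only [SigmaD, Set.mem_setOf_eq]
        refine ⟨ih.2 k s hs, ?_⟩
        cases k with
        | zero =>
          refine ⟨unif1 G hG, fun h0 => absurd rfl h0, ?_, ?_⟩
          · intro h _
            apply tsum_indicator_eq_one _ _ ((unif1 G hG).hasSum_one h)
            intro x hx
            have hx' : x.1 = 0 ∧ consistent1 G x.2 h.1 := by
              by_contra hc
              exact hx (if_neg hc)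
            have hmem : x.2 ∈ (LambdaD G v1 v2 f x.1).1 x.1 := by
              rw [hx'.1, lambda_zero1]
              exact Set.mem_univ _
            have := ih.1 x.1 x.2 hmem
            rwa [Prod.mk.eta] at this
          · intro h _ s2' _
            simp [expU2, payU2]
        | succ n =>
          simp only [LambdaD, Set.mem_setOf_eq, if_pos rfl] at hs
          obtain ⟨μ, hmem, hsupp, hsr⟩ := hs
          refine ⟨μ, hmem, ?_, hsr⟩
          intro h _
          apply tsum_indicator_eq_one _ _ (μ.hasSum_one h)
          have hrootsupp : ∀ x : ℕ × Strat1 G,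
              μ.p ⟨[], hroot⟩ x ≠ 0 → x ∈ (SigmaD G v1 v2 f m).1 := by
            intro x hx
            obtain ⟨hx1, hx2⟩ := ((hsupp hroot).1 x).1 hx
            rw [(lambda_stable G v1 v2 f n x.1 hx1).1] at hx2
            have := ih.1 x.1 x.2 hx2
            rwa [Prod.mk.eta] at this
          intro x hx
          by_cases hnil : h.1 = []
          · have heq : h = (⟨[], hroot⟩ : G.Hist) := Subtype.ext hnil
            rw [heq] at hx
            exact hrootsupp x hx
          · obtain ⟨s1c, hs1c⟩ := exists_consistent1 G hG h.1 h.2.1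
            have hpos0 : μ.p ⟨[], hroot⟩ (0, s1c) ≠ 0 := by
              apply ((hsupp hroot).1 (0, s1c)).2
              refine ⟨Nat.zero_le n, ?_⟩
              rw [lambda_zero1]
              exact Set.mem_univ _
            have hg0 : ∀ y : ℕ × Strat1 G,
                0 ≤ (if consistent1 G y.2 h.1 then μ.p ⟨[], hroot⟩ y else 0) := by
              intro y
              split_ifs
              exacts [μ.nonneg _ y, le_refl 0]
            have hgle : ∀ y : ℕ × Strat1 G,
                (if consistent1 G y.2 h.1 then μ.p ⟨[], hroot⟩ y else 0) ≤ μ.p ⟨[], hroot⟩ y := by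
              intro y
              split_ifs
              exacts [le_refl _, μ.nonneg _ y]
            have hgs : Summable (fun y : ℕ × Strat1 G =>
                if consistent1 G y.2 h.1 then μ.p ⟨[], hroot⟩ y else 0) :=
              Summable.of_nonneg_of_le hg0 hgle (μ.hasSum_one _).summable
            have hcpos : 0 < ∑' y : ℕ × Strat1 G,
                (if consistent1 G y.2 h.1 then μ.p ⟨[], hroot⟩ y else 0) := by
              have h1 : (0:ℝ) < (if consistent1 G (0, s1c).2 h.1 then μ.p ⟨[], hroot⟩ (0, s1c) else 0) := by
                rw [if_pos hs1c]
                exact lt_of_le_of_ne (μ.nonneg _ _) (Ne.symm hpos0)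
              exact lt_of_lt_of_le h1 (Summable.le_tsum hgs (0, s1c) (fun y _ => hg0 y))
            have hchain := μ.chain ⟨[], hroot⟩ h List.nil_suffix
              (fun e => hnil e.symm) x (μ.supp h x hx)
            apply hrootsupp
            rw [hchain]
            exact mul_ne_zero hx (ne_of_gt hcpos)
  refine ⟨?_, ?_, ?_, ?_⟩
  · intro k s hs
    exact (claim k).1 k s hs
  · intro k s hs
    exact (claim k).2 k s hs
  · intro k s hs
    refine Set.mem_iInter.2 (fun n => ?_)
    exact (claim n).1 k s (Set.mem_iInter.1 hs k)
  · intro k s hs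
    refine Set.mem_iInter.2 (fun n => ?_)
    exact (claim n).2 k s (Set.mem_iInter.1 hs k)
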